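/- Let G be a finite solvable group, p an odd prime, and E a normal subgroup of G which is an extraspecial p-group of order p^{2n+1} with center Z = Z(E). Suppose α ∈ G \ E has order 2 and C_Z(α) = 1, i.e., no nontrivial element of Z commutes with α. Then the number of elements of order 2 in the coset αE is at most p^{n+1}. -/

import Mathlib

open scoped commutatorElement


lemma hom_card_le (p : ℕ) (hp : p.Prime) (A M : Type*) [CommGroup A] [Finite A]
    (hA : ∀ a : A, a ^ p = 1) [CommGroup M] [Finite M] (hM : Nat.card M = p) :
    Nat.card (A →* M) ≤ Nat.card A := by
  haveI : Fact p.Prime := ⟨hp⟩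
  haveI : IsCyclic M := isCyclic_of_prime_card hM
  have e1 : Multiplicative (ZMod p) ≃* M := by
    subst hM; exact zmodCyclicMulEquiv inferInstance
  have e2 : (A →* M) ≃ (A →* Multiplicative (ZMod p)) :=
    MulEquiv.monoidHomCongrRightEquiv e1.symm
  have e3 : (A →* Multiplicative (ZMod p)) ≃ (Additive A →+ ZMod p) :=
    MonoidHom.toAdditiveLeft
  haveI : Module (ZMod p) (Additive A) := AddCommGroup.zmodModule (by
    intro x
    show p • x = 0
    have : (Additive.toMul x) ^ p = 1 := hA _
    exact congrArg Additive.ofMul this)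
  have e4 : (Additive A →+ ZMod p) ≃ (Additive A →ₗ[ZMod p] ZMod p) :=
    { toFun := fun f => f.toZModLinearMap p
      invFun := fun f => f.toAddMonoidHom
      left_inv := fun f => rfl
      right_inv := fun f => rfl }
  rw [Nat.card_congr (e2.trans (e3.trans e4))]
  haveI : Fintype (Additive A) := Fintype.ofFinite _
  haveI : Finite (Additive A →+ ZMod p) :=
    Finite.of_injective (fun (f : Additive A →+ ZMod p) => (f : Additive A → ZMod p))
      (fun f g h => by ext x; exact congrFun h x)
  haveI : Finite (Additive A →ₗ[ZMod p] ZMod p) := Finite.of_equiv _ e4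
  haveI : Fintype (Additive A →ₗ[ZMod p] ZMod p) := Fintype.ofFinite _
  have h1 : Nat.card (Additive A →ₗ[ZMod p] ZMod p)
      = p ^ Module.finrank (ZMod p) (Additive A →ₗ[ZMod p] ZMod p) := by
    rw [Nat.card_eq_fintype_card]
    have := Module.card_eq_pow_finrank (K := ZMod p) (V := Additive A →ₗ[ZMod p] ZMod p)
    rw [ZMod.card] at this
    exact this
  have h4 : Module.finrank (ZMod p) (Additive A →ₗ[ZMod p] ZMod p)
      = Module.finrank (ZMod p) (Additive A) := Subspace.dual_finrank_eq
  have h2 : Nat.card (Additive A) = p ^ Module.finrank (ZMod p) (Additive A) := by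
    rw [Nat.card_eq_fintype_card]
    have := Module.card_eq_pow_finrank (K := ZMod p) (V := Additive A)
    rw [ZMod.card] at this
    exact this
  have h3 : Nat.card A = Nat.card (Additive A) := Nat.card_congr Additive.ofMul
  rw [h1, h3, h2, h4]

lemma comm_mul_right {Eb : Type*} [Group Eb] (a b c : Eb)
    (h : Commute (a*c*a⁻¹*c⁻¹) b) :
    ⁅a, b*c⁆ = ⁅a, b⁆ * ⁅a, c⁆ := by
  have hz : a*c*a⁻¹*c⁻¹*b⁻¹ = b⁻¹*(a*c*a⁻¹*c⁻¹) := h.inv_right.eq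
  simp only [commutatorElement_def]
  calc a*(b*c)*a⁻¹*(b*c)⁻¹
      = a*b*(a⁻¹*(a*c*a⁻¹*c⁻¹*b⁻¹)) := by group
    _ = a*b*(a⁻¹*(b⁻¹*(a*c*a⁻¹*c⁻¹))) := by rw [hz]
    _ = (a*b*a⁻¹*b⁻¹)*(a*c*a⁻¹*c⁻¹) := by group

lemma comm_mul_left {Eb : Type*} [Group Eb] (a b c : Eb)
    (h : Commute (b*c*b⁻¹*c⁻¹) a) :
    ⁅a*b, c⁆ = ⁅b, c⁆ * ⁅a, c⁆ := by
  have hz : a*(b*c*b⁻¹*c⁻¹) = b*c*b⁻¹*c⁻¹*a := h.symm.eq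
  simp only [commutatorElement_def]
  calc (a*b)*c*(a*b)⁻¹*c⁻¹
      = (a*(b*c*b⁻¹*c⁻¹))*(c*a⁻¹*c⁻¹) := by group
    _ = (b*c*b⁻¹*c⁻¹*a)*(c*a⁻¹*c⁻¹) := by rw [hz]
    _ = (b*c*b⁻¹*c⁻¹)*(a*c*a⁻¹*c⁻¹) := by group

lemma abelian_bound (p n : ℕ) (hp : p.Prime) (Eb : Type*) [Group Eb] [Finite Eb]
    (hcard : Nat.card Eb = p ^ (2 * n + 1))
    (hc : Nat.card (Subgroup.center Eb) = p)
    (hcz : ∀ x y : Eb, ⁅x, y⁆ ∈ Subgroup.center Eb)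
    (hexp : ∀ x : Eb, x ^ p ∈ Subgroup.center Eb)
    (S : Set Eb) (hS : ∀ a ∈ S, ∀ b ∈ S, a * b = b * a) :
    Nat.card S ≤ p ^ (n + 1) := by
  classical
  have hczc : ∀ x y g : Eb, Commute (x*y*x⁻¹*y⁻¹) g := by
    intro x y g
    have := Subgroup.mem_center_iff.mp (hcz x y)
    have h2 := (this g).symm
    rw [commutatorElement_def] at h2
    exact h2
  set T : Set Eb := S ∪ (Subgroup.center Eb : Set Eb) with hT
  have hTcomm : ∀ a ∈ T, ∀ b ∈ T, a * b = b * a := by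
    rintro a (ha | ha) b (hb | hb)
    · exact hS a ha b hb
    · exact Subgroup.mem_center_iff.mp hb a
    · exact (Subgroup.mem_center_iff.mp ha b).symm
    · exact (Subgroup.mem_center_iff.mp ha b).symm
  set H : Subgroup Eb := Subgroup.closure T with hH
  have hTH : T ⊆ (H : Set Eb) := Subgroup.subset_closure
  have hTcent : ∀ t ∈ T, ∀ b ∈ H, t * b = b * t := by
    intro t ht b hb
    have hle : H ≤ Subgroup.centralizer {t} := by
      rw [hH, Subgroup.closure_le]
      intro u hu
      refine Subgroup.mem_centralizer_iff.mpr ?_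
      intro h hh
      rw [Set.mem_singleton_iff] at hh
      rw [hh]
      exact hTcomm t ht u hu
    exact Subgroup.mem_centralizer_iff.mp (hle hb) t rfl
  have habel : ∀ a ∈ H, ∀ b ∈ H, a * b = b * a := by
    intro a ha b hb
    have hle : H ≤ Subgroup.centralizer {b} := by
      rw [hH, Subgroup.closure_le]
      intro u hu
      refine Subgroup.mem_centralizer_iff.mpr ?_
      intro h hh
      rw [Set.mem_singleton_iff] at hh
      rw [hh]
      exact (hTcent u hu b hb).symm
    exact (Subgroup.mem_centralizer_iff.mp (hle ha) b rfl).symm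
  have hSH : S ⊆ (H : Set Eb) := fun s hs => hTH (Or.inl hs)
  have hZH : Subgroup.center Eb ≤ H := fun z hz => hTH (Or.inr hz)
  set C : Subgroup Eb := Subgroup.centralizer (H : Set Eb) with hC
  have hHC : H ≤ C := by
    intro x hx
    exact Subgroup.mem_centralizer_iff.mpr (fun h hh => habel h hh x hx)
  have hZC : Subgroup.center Eb ≤ C := by
    intro z hz
    exact Subgroup.mem_centralizer_iff.mpr (fun h _ => Subgroup.mem_center_iff.mp hz h)
  haveI hCnormal : C.Normal := by
    constructor
    intro c hcmem g
    refine Subgroup.mem_centralizer_iff.mpr ?_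
    intro h hh
    have hzc : g*c*g⁻¹ = (g*c*g⁻¹*c⁻¹) * c := by group
    have hz := hczc g c h
    have hch := Subgroup.mem_centralizer_iff.mp hcmem h hh
    rw [hzc, ← mul_assoc, hz.symm.eq, mul_assoc, hch, ← mul_assoc]
  letI : CommGroup (Eb ⧸ C) :=
    { (inferInstance : Group (Eb ⧸ C)) with
      mul_comm := by
        intro a b
        induction a using QuotientGroup.induction_on with | H x =>
        induction b using QuotientGroup.induction_on with | H y =>
        rw [← QuotientGroup.mk_mul, ← QuotientGroup.mk_mul]
        apply (QuotientGroup.eq (s := C)).mpr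
        have : (x*y)⁻¹ * (y*x) = ⁅y⁻¹, x⁻¹⁆ := by
          rw [commutatorElement_def]; group
        rw [this]
        exact hZC (hcz y⁻¹ x⁻¹) }
  have hQexp : ∀ q : Eb ⧸ C, q ^ p = 1 := by
    intro q
    induction q using QuotientGroup.induction_on with | H x =>
    rw [← QuotientGroup.mk_pow]
    exact (QuotientGroup.eq_one_iff _).mpr (hZC (hexp x))
  set M := ↥(Subgroup.center Eb) with hM
  have φaux : ∀ (h : ↥H) (e₁ e₂ : Eb),
      (⟨⁅(h:Eb), e₁*e₂⁆, hcz _ _⟩ : M) = ⟨⁅(h:Eb), e₁⁆, hcz _ _⟩ * ⟨⁅(h:Eb), e₂⁆, hcz _ _⟩ := by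
    intro h e₁ e₂
    apply Subtype.ext
    have := comm_mul_right (h:Eb) e₁ e₂ (hczc _ _ _)
    simpa using this
  set φ : ↥H → (Eb →* M) := fun h =>
    { toFun := fun e => ⟨⁅(h:Eb), e⁆, hcz _ _⟩
      map_one' := by apply Subtype.ext; simp [commutatorElement_one_right]
      map_mul' := fun e₁ e₂ => φaux h e₁ e₂ } with hφ
  have hφvanish : ∀ (h : ↥H), C ≤ (φ h).ker := by
    intro h c hcmem
    have : (h:Eb) * c = c * (h:Eb) :=
      Subgroup.mem_centralizer_iff.mp hcmem (h:Eb) h.2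
    apply Subtype.ext
    simpa [hφ] using commutatorElement_eq_one_iff_commute.mpr this
  letI : CommGroup M := { (inferInstance : Group M) with
    mul_comm := fun a b => Subtype.ext (Subgroup.mem_center_iff.mp b.2 a) }
  set Ψ : ↥H →* ((Eb ⧸ C) →* M) :=
    { toFun := fun h => QuotientGroup.lift C (φ h) (hφvanish h)
      map_one' := by
        apply MonoidHom.ext
        intro q
        induction q using QuotientGroup.induction_on with | H x =>
        apply Subtype.ext
        simp [hφ, commutatorElement_one_left]
      map_mul' := by
        intro h₁ h₂
        apply MonoidHom.ext
        intro q
        induction q using QuotientGroup.induction_on with | H x =>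
        apply Subtype.ext
        have key := comm_mul_left (h₁:Eb) (h₂:Eb) x (hczc _ _ _)
        have swap : ⁅(h₂:Eb), x⁆ * ⁅(h₁:Eb), x⁆ = ⁅(h₁:Eb), x⁆ * ⁅(h₂:Eb), x⁆ :=
          (Subgroup.mem_center_iff.mp (hcz (h₂:Eb) x) _).symm
        simp only [hφ, QuotientGroup.lift_mk, MonoidHom.mul_apply, MonoidHom.coe_mk,
          OneHom.coe_mk, Submonoid.mk_mul_mk]
        rw [Subgroup.coe_mul, key, swap]
        rfl } with hΨ
  have hker : ∀ h : ↥H, h ∈ Ψ.ker → (h:Eb) ∈ Subgroup.center Eb := by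
    intro h hh
    rw [Subgroup.mem_center_iff]
    intro g
    have : Ψ h (QuotientGroup.mk g) = 1 := by rw [hh]; rfl
    have h1 : ⁅(h:Eb), g⁆ = 1 := congrArg Subtype.val this
    have := commutatorElement_eq_one_iff_commute.mp h1
    exact this.symm.eq
  -- cardinality chase
  haveI : Finite (Eb ⧸ C) := Quotient.finite _
  haveI : Finite ((Eb ⧸ C) →* M) :=
    Finite.of_injective (fun (f : (Eb ⧸ C) →* M) => (f : (Eb ⧸ C) → M))
      (fun f g h => MonoidHom.ext (fun x => congrFun h x))
  have c1 : Nat.card ↥H = Nat.card (↥H ⧸ Ψ.ker) * Nat.card Ψ.ker :=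
    Subgroup.card_eq_card_quotient_mul_card_subgroup _
  have c2 : Nat.card (↥H ⧸ Ψ.ker) = Nat.card Ψ.range :=
    Nat.card_congr (QuotientGroup.quotientKerEquivRange Ψ).toEquiv
  have c3 : Nat.card Ψ.range ≤ Nat.card ((Eb ⧸ C) →* M) :=
    Subgroup.card_le_card_group _
  have c4 : Nat.card Ψ.ker ≤ p := by
    rw [← hc]
    refine Nat.card_le_card_of_injective
      (fun k : ↥Ψ.ker => (⟨((k : ↥H) : Eb), hker _ k.2⟩ : M)) ?_
    intro a b hab
    have h2 := congrArg Subtype.val hab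
    exact Subtype.ext (Subtype.ext h2)
  have c5 : Nat.card ((Eb ⧸ C) →* M) ≤ Nat.card (Eb ⧸ C) :=
    hom_card_le p hp _ M hQexp hc
  have c6 : Nat.card Eb = Nat.card (Eb ⧸ C) * Nat.card C :=
    Subgroup.card_eq_card_quotient_mul_card_subgroup C
  have c7 : Nat.card ↥H ≤ Nat.card C := Subgroup.card_le_of_le hHC
  have hcardH : Nat.card ↥H * Nat.card ↥H ≤ p ^ (n+1) * p ^ (n+1) := by
    have e1 : Nat.card ↥H ≤ Nat.card (Eb ⧸ C) * p := by
      calc Nat.card ↥H = Nat.card (↥H ⧸ Ψ.ker) * Nat.card Ψ.ker := c1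
        _ ≤ Nat.card ((Eb ⧸ C) →* M) * p :=
            Nat.mul_le_mul (c2 ▸ c3) c4
        _ ≤ Nat.card (Eb ⧸ C) * p := Nat.mul_le_mul_right p c5
    calc Nat.card ↥H * Nat.card ↥H
        ≤ (Nat.card (Eb ⧸ C) * p) * Nat.card C := Nat.mul_le_mul e1 c7
      _ = p * (Nat.card (Eb ⧸ C) * Nat.card C) := by ring
      _ = p * Nat.card Eb := by rw [← c6]
      _ = p ^ (n+1) * p ^ (n+1) := by rw [hcard]; ring
  have hfin : Nat.card ↥H ≤ p ^ (n+1) := Nat.mul_self_le_mul_self_iff.mp hcardH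
  refine le_trans ?_ hfin
  refine Nat.card_le_card_of_injective (fun s : S => (⟨(s:Eb), hSH s.2⟩ : ↥H)) ?_
  intro a b hab
  have h2 := congrArg Subtype.val hab
  exact Subtype.ext h2


/-- Let `G` be a finite solvable group, `p` an odd prime, and `E` a normal
subgroup of `G` which is an extraspecial `p`-group of order `p^(2n+1)` (its center `Z` has
order `p`, its commutator subgroup equals its center, and the quotient by the center is
elementary abelian).  If `α ∈ G \ E` has order `2` and no nontrivial element of `Z` commutes
with `α`, then the number of elements of order `2` in the coset `αE` is at most `p^(n+1)`. -/
theorem stmt0 (G : Type*) [Group G] [Fintype G] (hsolv : IsSolvable G)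
    (p n : ℕ) (hp : p.Prime) (hodd : Odd p)
    (E : Subgroup G) (hEnormal : E.Normal)
    (hcardE : Nat.card E = p ^ (2 * n + 1))
    (hcenter : Nat.card (Subgroup.center E) = p)
    (hcomm : commutator E = Subgroup.center E)
    (helem : ∀ x : E, x ^ p ∈ Subgroup.center E)
    (α : G) (hαE : α ∉ E) (hα2 : orderOf α = 2)
    (hCZ : ∀ z ∈ (Subgroup.center E).map E.subtype, z ≠ 1 → α * z ≠ z * α) :
    Nat.card {x : G | orderOf x = 2 ∧ α⁻¹ * x ∈ E} ≤ p ^ (n + 1) := by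
  classical
  have hα_sq : α * α = 1 := by
    have h := pow_orderOf_eq_one α
    rw [hα2, pow_two] at h
    exact h
  have hαinv : α⁻¹ = α := inv_eq_of_mul_eq_one_right hα_sq
  set ZG : Subgroup G := (Subgroup.center E).map E.subtype with hZGdef
  have hZGcard : Nat.card ZG = p := by
    rw [← hcenter]
    exact (Nat.card_congr
      (Subgroup.equivMapOfInjective (Subgroup.center E) E.subtype
        E.subtype_injective).toEquiv).symm
  have memZ : ∀ z : G, z ∈ ZG ↔ (z ∈ E ∧ ∀ e ∈ E, z * e = e * z) := by
    intro z
    constructor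
    · rintro ⟨c, hc, rfl⟩
      refine ⟨c.2, ?_⟩
      intro e he
      have h1 := Subgroup.mem_center_iff.mp hc ⟨e, he⟩
      have h2 := congrArg Subtype.val h1
      exact h2.symm
    · rintro ⟨hzE, hzc⟩
      exact ⟨⟨z, hzE⟩,
        Subgroup.mem_center_iff.mpr (fun g => Subtype.ext (hzc (g : G) g.2).symm), rfl⟩
  have hZG_le : ZG ≤ E := fun z hz => ((memZ z).mp hz).1
  have hZinv : ∀ z ∈ ZG, α * z * α⁻¹ = z⁻¹ := by
    intro z hz
    obtain ⟨hzE, hzc⟩ := (memZ z).mp hz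
    have hwZ : α * z * α⁻¹ ∈ ZG := by
      rw [memZ]
      refine ⟨hEnormal.conj_mem z hzE α, ?_⟩
      intro e he
      have he' : α⁻¹ * e * α ∈ E := by
        have h := hEnormal.conj_mem e he α⁻¹
        rwa [inv_inv] at h
      have hcz' := hzc _ he'
      calc (α*z*α⁻¹) * e = α * (z * (α⁻¹ * e * α)) * α⁻¹ := by group
        _ = α * ((α⁻¹ * e * α) * z) * α⁻¹ := by rw [hcz']
        _ = e * (α*z*α⁻¹) := by group
    set w : G := α * z * α⁻¹ with hwdef
    have huZ : w * z ∈ ZG := mul_mem hwZ hz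
    have hswap : z * w = w * z := hzc w (hZG_le hwZ)
    have hcommα : α * (w * z) = (w * z) * α := by
      have e1 : α * (w * z) = (α * α) * z * α⁻¹ * z := by rw [hwdef]; group
      have e2 : (w * z) * α = (z * w) * α := by rw [hswap]
      have e3 : (z * w) * α = z * (α * z) * (α⁻¹ * α) := by rw [hwdef]; group
      rw [e1, hα_sq, e2, e3, hαinv, hα_sq]
      group
    have hu1 : w * z = 1 := by
      by_contra hne
      exact hCZ (w * z) huZ hne hcommα
    exact eq_inv_of_mul_eq_one_left hu1
  -- the set of inverted elements of E
  set S' : Set ↥E := {e : ↥E | α * (e : G) * α⁻¹ = ((e : G))⁻¹} with hS'def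
  have hS'comm : ∀ a ∈ S', ∀ b ∈ S', a * b = b * a := by
    intro a ha b hb
    set x : G := (a : G) with hxdef
    set y : G := (b : G) with hydef
    have hxE : x ∈ E := a.2
    have hyE : y ∈ E := b.2
    have hx : α * x * α⁻¹ = x⁻¹ := ha
    have hy : α * y * α⁻¹ = y⁻¹ := hb
    set c : G := x * y * x⁻¹ * y⁻¹ with hcdef
    have hcZG : c ∈ ZG := by
      have hmem : ⁅a, b⁆ ∈ Subgroup.center ↥E := by
        rw [← hcomm]
        exact Subgroup.commutator_mem_commutator (Subgroup.mem_top a) (Subgroup.mem_top b)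
      exact ⟨⁅a, b⁆, hmem, rfl⟩
    have hcc := ((memZ c).mp hcZG).2
    have hc_conj : α * c * α⁻¹ = x⁻¹ * y⁻¹ * x * y := by
      have e1 : α * c * α⁻¹
          = (α*x*α⁻¹) * (α*y*α⁻¹) * (α*x*α⁻¹)⁻¹ * (α*y*α⁻¹)⁻¹ := by
        rw [hcdef]; group
      rw [e1, hx, hy, inv_inv, inv_inv]
    have hxy : x * y = c * (y * x) := by rw [hcdef]; group
    have hfix : x⁻¹ * y⁻¹ * x * y = c := by
      have hcmem : x⁻¹ * y⁻¹ ∈ E := mul_mem (inv_mem hxE) (inv_mem hyE)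
      calc x⁻¹*y⁻¹*x*y = x⁻¹*y⁻¹*(x*y) := by group
        _ = x⁻¹*y⁻¹*(c*(y*x)) := by rw [← hxy]
        _ = ((x⁻¹*y⁻¹)*c)*(y*x) := by group
        _ = (c*(x⁻¹*y⁻¹))*(y*x) := by rw [(hcc _ hcmem).symm]
        _ = c := by rw [hcdef]; group
    have hc_inv : α * c * α⁻¹ = c⁻¹ := hZinv c hcZG
    have hc_eq : c⁻¹ = c := by rw [← hc_inv, hc_conj, hfix]
    have hc2 : c ^ 2 = 1 := by
      rw [pow_two]
      nth_rewrite 1 [← hc_eq]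
      exact inv_mul_cancel c
    have hcp : c ^ p = 1 := by
      have h1 : (⟨c, hcZG⟩ : ↥ZG) ^ Nat.card ↥ZG = 1 := pow_card_eq_one'
      rw [hZGcard] at h1
      have h2 := congrArg Subtype.val h1
      simpa using h2
    obtain ⟨k, hk⟩ := hodd
    have hc1 : c = 1 := by
      have h3 : c ^ p = c := by
        rw [hk, pow_succ, pow_mul, hc2, one_pow, one_mul]
      rw [← h3, hcp]
    have hxyc : x * y = y * x := by
      rw [hxy, hc1, one_mul]
    exact Subtype.ext hxyc
  have hbound : Nat.card S' ≤ p ^ (n + 1) := by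
    refine abelian_bound p n hp ↥E hcardE hcenter ?_ helem S' hS'comm
    intro x y
    rw [← hcomm]
    exact Subgroup.commutator_mem_commutator (Subgroup.mem_top x) (Subgroup.mem_top y)
  have hmemS' : ∀ g : G, g * g = 1 → α * (α⁻¹ * g) * α⁻¹ = (α⁻¹ * g)⁻¹ := by
    intro g hgg
    have hginv : g⁻¹ = g := inv_eq_of_mul_eq_one_right hgg
    have hstep : α * (α⁻¹ * g) * α⁻¹ = (α * α⁻¹) * (g * α⁻¹) := by group
    rw [hstep, mul_inv_cancel, one_mul, mul_inv_rev, inv_inv, hginv, hαinv]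
  refine le_trans ?_ hbound
  refine Nat.card_le_card_of_injective
    (fun x : {x : G | orderOf x = 2 ∧ α⁻¹ * x ∈ E} =>
      (⟨⟨α⁻¹ * (x : G), x.2.2⟩, by
        refine hmemS' (x : G) ?_
        have h := pow_orderOf_eq_one (x : G)
        rw [x.2.1, pow_two] at h
        exact h⟩ : S')) ?_
  intro a b hab
  have h2 := congrArg (fun s : ↥S' => ((s : ↥E) : G)) hab
  simp only at h2
  exact Subtype.ext (mul_left_cancel h2)
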